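/- Let Λ be a measurable space, μ a probability measure on Λ, d a natural number, and for each i ∈ Fin d let 𝒩ᵢ be a set of probability measures on Λ and fᵢ : Λ → ℝ a measurable function with 0 ≤ fᵢ(λ) and Σ_{i} fᵢ(λ) = 1 for every λ ∈ Λ. Suppose ∫ fᵢ dν = 1 for every i ∈ Fin d and every ν ∈ 𝒩ᵢ, and suppose moreover (the ESMR/EMMR support condition) that every measurable Ω ⊆ Λ with ν(Ω) = 1 for every ν ∈ ⋃_i 𝒩ᵢ satisfies μ(Ω) = 1. Then ϖ(𝒩ᵢ | μ) = ∫ fᵢ dμ for every i ∈ Fin d. -/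

import Mathlib

open MeasureTheory

/-- The asymmetric overlap `ϖ(𝒩|μ)`: the infimum of `μ Ω` over measurable sets `Ω`
that have full measure for every measure in `𝒩`. -/
noncomputable def asymmetricOverlap {Λ : Type*} [MeasurableSpace Λ]
    (N : Set (Measure Λ)) (μ : Measure Λ) : ℝ :=
  sInf { x : ℝ | ∃ Ω : Set Λ, MeasurableSet Ω ∧ (∀ ν ∈ N, ν Ω = 1) ∧ x = (μ Ω).toReal }

theorem esmr_overlap_saturates_born {Λ : Type*} [MeasurableSpace Λ]
    (μ : Measure Λ) [IsProbabilityMeasure μ]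
    (d : ℕ) (N : Fin d → Set (Measure Λ))
    (hN : ∀ i : Fin d, ∀ ν ∈ N i, IsProbabilityMeasure ν)
    (f : Fin d → Λ → ℝ) (hfm : ∀ i : Fin d, Measurable (f i))
    (hf0 : ∀ i : Fin d, ∀ x : Λ, 0 ≤ f i x)
    (hfsum : ∀ x : Λ, ∑ i : Fin d, f i x = 1)
    (hint : ∀ i : Fin d, ∀ ν ∈ N i, ∫ x, f i x ∂ν = 1)
    (hsupp : ∀ Ω : Set Λ, MeasurableSet Ω →
      (∀ ν ∈ ⋃ i : Fin d, N i, ν Ω = 1) → μ Ω = 1) :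
    ∀ i : Fin d, asymmetricOverlap (N i) μ = ∫ x, f i x ∂μ := by
  intro i
  -- eigenstate supports
  set S : Fin d → Set Λ := fun j => f j ⁻¹' {1} with hSdef
  have hSm : ∀ j, MeasurableSet (S j) := fun j => (hfm j) (measurableSet_singleton 1)
  have hfle1 : ∀ j x, f j x ≤ 1 := by
    intro j x
    calc f j x ≤ ∑ k, f k x :=
          Finset.single_le_sum (fun k _ => hf0 k x) (Finset.mem_univ j)
      _ = 1 := hfsum x
  have hInt : ∀ (ν : Measure Λ) [IsProbabilityMeasure ν] (j : Fin d),
      Integrable (f j) ν := by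
    intro ν _ j
    refine Integrable.mono' (integrable_const 1) (hfm j).aestronglyMeasurable
      (Filter.Eventually.of_forall fun x => ?_)
    rw [Real.norm_eq_abs, abs_of_nonneg (hf0 j x)]
    exact hfle1 j x
  -- pairwise: on S j (j ≠ i), f i vanishes
  have hzero : ∀ j, j ≠ i → ∀ x ∈ S j, f i x = 0 := by
    intro j hj x hx
    have hx1 : f j x = 1 := hx
    have hsum2 : f i x + f j x ≤ ∑ k, f k x := by
      have := Finset.sum_le_sum_of_subset_of_nonneg
        (Finset.subset_univ ({i, j} : Finset (Fin d)))
        (fun k _ _ => hf0 k x)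
      rwa [Finset.sum_pair (Ne.symm hj)] at this
    rw [hfsum x, hx1] at hsum2
    have : f i x ≤ 0 := by linarith
    exact le_antisymm this (hf0 i x)
  -- each ν ∈ N j gives S j full measure
  have hνS : ∀ j, ∀ ν ∈ N j, ν (S j) = 1 := by
    intro j ν hν
    haveI := hN j ν hν
    have h1 : ∫ x, (1 - f j x) ∂ν = 0 := by
      rw [integral_sub (integrable_const 1) (hInt ν j), integral_const]
      simp [hint j ν hν]
    have h2 : (fun x => 1 - f j x) =ᵐ[ν] 0 := by
      rw [← integral_eq_zero_iff_of_nonneg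
        (fun x => sub_nonneg.2 (hfle1 j x)) ((integrable_const 1).sub (hInt ν j))]
      exact h1
    have hc : ν (S j)ᶜ = 0 := by
      have := h2
      rw [Filter.EventuallyEq, Filter.eventually_iff, mem_ae_iff] at this
      have hsub : (S j)ᶜ ⊆ {x | (fun x => 1 - f j x) x = (0 : Λ → ℝ) x}ᶜ := by
        intro x hx
        simp only [Set.mem_compl_iff, Set.mem_setOf_eq, Pi.zero_apply]
        intro h
        exact hx (by simp only [hSdef, Set.mem_preimage, Set.mem_singleton_iff]; linarith)
      exact measure_mono_null hsub this
    rw [← prob_compl_eq_zero_iff (hSm j)]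
    exact hc
  -- the defining set
  set A : Set ℝ :=
    { x : ℝ | ∃ Ω : Set Λ, MeasurableSet Ω ∧ (∀ ν ∈ N i, ν Ω = 1) ∧ x = (μ Ω).toReal }
    with hA
  have hAne : A.Nonempty := ⟨(μ Set.univ).toReal, Set.univ, MeasurableSet.univ,
    fun ν hν => (hN i ν hν).measure_univ, rfl⟩
  -- lower bound: every element of A is ≥ ∫ f i dμ
  have hlb : ∀ a ∈ A, ∫ x, f i x ∂μ ≤ a := by
    rintro a ⟨Ω, hΩm, hΩν, rfl⟩
    set U : Set Λ := ⋃ j ∈ ({i}ᶜ : Set (Fin d)), S j with hUdef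
    have hUm : MeasurableSet U :=
      MeasurableSet.biUnion (Set.to_countable _) (fun j _ => hSm j)
    have hfull : μ (Ω ∪ U) = 1 := by
      apply hsupp _ (hΩm.union hUm)
      intro ν hν
      rw [Set.mem_iUnion] at hν
      obtain ⟨j, hνj⟩ := hν
      haveI := hN j ν hνj
      refine le_antisymm prob_le_one ?_
      by_cases hji : j = i
      · subst hji
        calc (1 : ENNReal) = ν Ω := (hΩν ν hνj).symm
          _ ≤ ν (Ω ∪ U) := measure_mono Set.subset_union_left
      · calc (1 : ENNReal) = ν (S j) := (hνS j ν hνj).symm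
          _ ≤ ν (Ω ∪ U) := measure_mono
              (Set.Subset.trans (Set.subset_biUnion_of_mem hji) Set.subset_union_right)
    -- f i ≤ indicator of Uᶜ
    have hptwise : ∀ x, f i x ≤ Uᶜ.indicator (fun _ => (1 : ℝ)) x := by
      intro x
      by_cases hx : x ∈ U
      · have : f i x = 0 := by
          rw [hUdef] at hx
          simp only [Set.mem_iUnion] at hx
          obtain ⟨j, hj, hxj⟩ := hx
          exact hzero j hj x hxj
        rw [this, Set.indicator_of_notMem (by simpa using hx)]
      · rw [Set.indicator_of_mem (by simpa using hx)]
        exact hfle1 i x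
    have hintle : ∫ x, f i x ∂μ ≤ (μ Uᶜ).toReal := by
      calc ∫ x, f i x ∂μ ≤ ∫ x, Uᶜ.indicator (fun _ => (1 : ℝ)) x ∂μ :=
            integral_mono (hInt μ i) ((integrable_const 1).indicator hUm.compl) hptwise
        _ = (μ Uᶜ).toReal := by
            rw [integral_indicator hUm.compl]; simp [Measure.real]
    have hcompl : (μ Uᶜ).toReal = 1 - (μ U).toReal := by
      rw [measure_compl hUm (measure_ne_top μ U), measure_univ,
        ENNReal.toReal_sub_of_le prob_le_one (by simp)]
      simp
    have hsum' : (1 : ℝ) ≤ (μ Ω).toReal + (μ U).toReal := by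
      have h1 : (1 : ENNReal) ≤ μ Ω + μ U := by
        rw [← hfull]; exact measure_union_le Ω U
      have := ENNReal.toReal_mono
        (by simp [ENNReal.add_ne_top, measure_ne_top]) h1
      rwa [ENNReal.toReal_one, ENNReal.toReal_add (measure_ne_top μ Ω) (measure_ne_top μ U)]
        at this
    linarith [hintle, hcompl, hsum']
  -- upper bound: (μ (S i)).toReal ∈ A and is ≤ ∫ f i dμ
  have hSiA : (μ (S i)).toReal ∈ A := ⟨S i, hSm i, hνS i, rfl⟩
  have hub : (μ (S i)).toReal ≤ ∫ x, f i x ∂μ := by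
    calc (μ (S i)).toReal = ∫ x, (S i).indicator (fun _ => (1 : ℝ)) x ∂μ := by
          rw [integral_indicator (hSm i)]; simp [Measure.real]
      _ ≤ ∫ x, f i x ∂μ := by
          refine integral_mono ((integrable_const 1).indicator (hSm i)) (hInt μ i) ?_
          intro x
          by_cases hx : x ∈ S i
          · rw [Set.indicator_of_mem hx]
            exact le_of_eq hx.symm
          · rw [Set.indicator_of_notMem hx]
            exact hf0 i x
  have hbdd : BddBelow A := ⟨∫ x, f i x ∂μ, hlb⟩
  refine le_antisymm ?_ (le_csInf hAne hlb)
  exact le_trans (csInf_le hbdd hSiA) hub
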